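/- Let E be a directed graph and let H ⊆ E⁰ be a nonempty saturated hereditary subset such that every saturated hereditary subset K of E⁰ satisfies K ⊆ H or K = E⁰. Suppose E contains a cycle all of whose vertices lie in E⁰ ∖ H. Then there exist a cycle γ in E all of whose vertices lie in E⁰ ∖ H and an edge f ∈ E¹ with s(f) = s(γ) (the base point of γ) and r(f) ∈ H; moreover, for every vertex x ∈ E⁰ one has x ≥ s(γ) if and only if x ∉ H. -/

import Mathlib

/-- In a directed graph with edge set `E`, vertex set `V`, and source and range
maps `s r : E → V`, the vertex `v` reaches the vertex `w` (written `v ≥ w`) if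
there is a directed path (possibly of length zero) from `v` to `w`. -/
def Reaches {V E : Type*} (s r : E → V) : V → V → Prop :=
  Relation.ReflTransGen (fun v w => ∃ e : E, s e = v ∧ r e = w)

/-- A set `H` of vertices is hereditary if `v ∈ H` and `v ≥ w` imply `w ∈ H`. -/
def Hereditary {V E : Type*} (s r : E → V) (H : Set V) : Prop :=
  ∀ ⦃v w : V⦄, v ∈ H → Reaches s r v w → w ∈ H

/-- A vertex `v` is regular if `0 < |s⁻¹(v)| < ∞`. -/
def RegularVertex {V E : Type*} (s : E → V) (v : V) : Prop :=
  {e : E | s e = v}.Nonempty ∧ {e : E | s e = v}.Finite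

/-- A set `H` of vertices is saturated if every regular vertex all of whose
outgoing edges end in `H` belongs to `H`. -/
def Saturated {V E : Type*} (s r : E → V) (H : Set V) : Prop :=
  ∀ v : V, RegularVertex s v → (∀ e : E, s e = v → r e ∈ H) → v ∈ H

section Aux
variable {V E : Type*} (s r : E → V)

def IsPath : V → List E → V → Prop
  | a, [], b => a = b
  | a, e :: l, b => s e = a ∧ IsPath (r e) l b

variable {s r}

lemma isPath_append {a b c : V} {l₁ l₂ : List E} (h₁ : IsPath s r a l₁ b)
    (h₂ : IsPath s r b l₂ c) : IsPath s r a (l₁ ++ l₂) c := by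
  induction l₁ generalizing a with
  | nil => simp only [IsPath] at h₁; subst h₁; simpa using h₂
  | cons e l ih => exact ⟨h₁.1, ih h₁.2⟩

lemma isPath_reaches {a b : V} {l : List E} (h : IsPath s r a l b) :
    Reaches s r a b := by
  induction l generalizing a with
  | nil => simp only [IsPath] at h; subst h; exact Relation.ReflTransGen.refl
  | cons e l ih =>
      exact Relation.ReflTransGen.head ⟨e, h.1, rfl⟩ (ih h.2)

lemma reaches_exists_isPath {a b : V} (h : Reaches s r a b) :
    ∃ l : List E, IsPath s r a l b := by
  induction h using Relation.ReflTransGen.head_induction_on with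
  | refl => exact ⟨[], rfl⟩
  | head h' _ ih =>
      obtain ⟨e, hse, hre⟩ := h'
      obtain ⟨l, hl⟩ := ih
      exact ⟨e :: l, hse, hre ▸ hl⟩

lemma isPath_src_zero {a b : V} {l : List E} (h : IsPath s r a l b)
    (hl : 0 < l.length) : s (l.get ⟨0, hl⟩) = a := by
  cases l with
  | nil => simp at hl
  | cons e l => exact h.1

lemma isPath_src_get_reaches {a b : V} {l : List E} (h : IsPath s r a l b) :
    ∀ i (hi : i < l.length), Reaches s r (s (l.get ⟨i, hi⟩)) b := by
  induction l generalizing a with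
  | nil => intro i hi; simp at hi
  | cons e l ih =>
      intro i hi
      match i with
      | 0 => simpa [h.1] using isPath_reaches h
      | Nat.succ j => exact ih h.2 j (by simpa using hi)

lemma isPath_chain_get {a b : V} {l : List E} (h : IsPath s r a l b) :
    ∀ i (hi : i + 1 < l.length),
      r (l.get ⟨i, by omega⟩) = s (l.get ⟨i + 1, hi⟩) := by
  induction l generalizing a with
  | nil => intro i hi; simp at hi
  | cons e l ih =>
      intro i hi
      match i with
      | 0 =>
          have hl : 0 < l.length := by simpa using hi
          simpa using (isPath_src_zero h.2 hl).symm
      | Nat.succ j => exact ih h.2 j (by simpa using hi)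

lemma isPath_last_get {a b : V} {l : List E} (h : IsPath s r a l b) :
    ∀ i (hi : i < l.length), i + 1 = l.length → r (l.get ⟨i, hi⟩) = b := by
  induction l generalizing a with
  | nil => intro i hi; simp at hi
  | cons e l ih =>
      intro i hi hlast
      match i with
      | 0 =>
          have : l = [] := by
            have : l.length = 0 := by simpa using hlast.symm
            exact List.length_eq_zero_iff.mp this
          subst this
          simpa [IsPath] using h.2
      | Nat.succ j => exact ih h.2 j (by simpa using hi) (by simpa using hlast)

lemma crossing {H : Set V} {a b : V} (hab : Reaches s r a b) (hb : b ∈ H) :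
    a ∉ H → ∃ (v : V) (f : E), v ∉ H ∧ s f = v ∧ r f ∈ H ∧ Reaches s r a v := by
  induction hab using Relation.ReflTransGen.head_induction_on with
  | refl => intro ha; exact absurd hb ha
  | @head a c h' h ih =>
      intro ha
      obtain ⟨e, hse, hre⟩ := h'
      by_cases hc : c ∈ H
      · exact ⟨a, e, ha, hse, hre ▸ hc, Relation.ReflTransGen.refl⟩
      · obtain ⟨v, f, h1, h2, h3, h4⟩ := ih hc
        exact ⟨v, f, h1, h2, h3, Relation.ReflTransGen.head ⟨e, hse, hre⟩ h4⟩

end Aux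
theorem exists_cycle_with_edge_into {V E : Type*} (s r : E → V) (H : Set V)
    (hH : Hereditary s r H ∧ Saturated s r H) (hne : H.Nonempty)
    (hmax : ∀ K : Set V, Hereditary s r K → Saturated s r K →
      K ⊆ H ∨ K = Set.univ)
    (n : ℕ) (α : Fin (n + 1) → E)
    (hchain : ∀ i : Fin (n + 1), r (α i) = s (α (i + 1)))
    (hout : ∀ i : Fin (n + 1), s (α i) ∉ H) :
    ∃ (m : ℕ) (γ : Fin (m + 1) → E) (f : E),
      (∀ i : Fin (m + 1), r (γ i) = s (γ (i + 1))) ∧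
      (∀ i : Fin (m + 1), s (γ i) ∉ H) ∧
      s f = s (γ 0) ∧ r f ∈ H ∧
      (∀ x : V, Reaches s r x (s (γ 0)) ↔ x ∉ H) := by
  obtain ⟨hHer, hSat⟩ := hH
  -- reachability along the cycle
  have hstep : ∀ i : Fin (n + 1), Reaches s r (s (α i)) (s (α (i + 1))) :=
    fun i => Relation.ReflTransGen.single ⟨α i, rfl, hchain i⟩
  open Fin.NatCast Fin.CommRing in
  have haux : ∀ (k : ℕ) (i : Fin (n + 1)),
      Reaches s r (s (α i)) (s (α (i + (k : Fin (n + 1))))) := by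
    intro k
    induction k with
    | zero => intro i; simp only [Nat.cast_zero, add_zero]; exact Relation.ReflTransGen.refl
    | succ k ih =>
        intro i
        have hcast : ((k + 1 : ℕ) : Fin (n + 1)) = (k : Fin (n + 1)) + 1 := by
          push_cast; ring
        rw [hcast, ← add_assoc]
        exact (ih i).trans (hstep _)
  have hpair : ∀ i : Fin (n + 1), Reaches s r (s (α i)) (s (α 0)) := by
    intro i
    have h := haux ((0 - i : Fin (n + 1)).val) i
    rw [Fin.cast_val_eq_self] at h
    have : i + (0 - i) = (0 : Fin (n + 1)) := by ring
    rwa [this] at h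
  -- Step A : every vertex reaches H
  have hreachH : ∀ x : V, ∃ h ∈ H, Reaches s r x h := by
    set K : Set V := {x | ¬ ∃ h ∈ H, Reaches s r x h} with hK
    have hKher : Hereditary s r K := by
      intro v w hv hvw
      intro ⟨h, hh, hwh⟩
      exact hv ⟨h, hh, hvw.trans hwh⟩
    have hKsat : Saturated s r K := by
      intro v hreg hall
      intro ⟨h, hh, hvh⟩
      rcases hvh.cases_head with heq | ⟨w, ⟨e, hse, hre⟩, hwh⟩
      · subst heq
        obtain ⟨e, he⟩ := hreg.1
        have hre : r e ∈ K := hall e he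
        have : r e ∈ H := hHer hh (Relation.ReflTransGen.single ⟨e, he, rfl⟩)
        exact hre ⟨r e, this, Relation.ReflTransGen.refl⟩
      · subst hre
        exact hall e hse ⟨h, hh, hwh⟩
    rcases hmax K hKher hKsat with hsub | huniv
    · intro x
      by_contra hx
      push_neg at hx
      have hxK : x ∈ K := fun ⟨h, hh, hxh⟩ => hx h hh hxh
      have hxH : x ∈ H := hsub hxK
      exact hxK ⟨x, hxH, Relation.ReflTransGen.refl⟩
    · obtain ⟨h0, hh0⟩ := hne
      have : h0 ∈ K := huniv ▸ Set.mem_univ h0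
      exact absurd ⟨h0, hh0, Relation.ReflTransGen.refl⟩ this
  -- Step B : every vertex outside H reaches the base point of the cycle
  have hreachC : ∀ x : V, x ∉ H → Reaches s r x (s (α 0)) := by
    set K : Set V := {x | ¬ Reaches s r x (s (α 0))} with hK
    have hKher : Hereditary s r K := fun v w hv hvw hw => hv (hvw.trans hw)
    have hKsat : Saturated s r K := by
      intro v hreg hall hv
      rcases hv.cases_head with heq | ⟨w, ⟨e, hse, hre⟩, hwh⟩
      · have h0 : r (α 0) ∈ K := hall (α 0) heq.symm
        exact h0 ((show r (α 0) = s (α 1) by simpa using hchain 0) ▸ hpair 1)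
      · subst hre
        exact hall e hse hwh
    rcases hmax K hKher hKsat with hsub | huniv
    · intro x hx
      by_contra hxK
      exact hx (hsub hxK)
    · have : s (α 0) ∈ K := huniv ▸ Set.mem_univ _
      exact absurd Relation.ReflTransGen.refl this
  -- Step C : find the crossing edge
  obtain ⟨h0, hh0, hp⟩ := hreachH (s (α 0))
  obtain ⟨v, f, hvH, hsf, hrf, hreachv⟩ := crossing hp hh0 (hout 0)
  -- Step D : build a closed walk based at v
  obtain ⟨l1, hl1⟩ := reaches_exists_isPath hreachv  -- s(α 0) → v
  obtain ⟨l2, hl2⟩ := reaches_exists_isPath (hreachC v hvH)  -- v → s(α 0)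
  obtain ⟨l3, hl3⟩ := reaches_exists_isPath ((show r (α 0) = s (α 1) by simpa using hchain 0) ▸ hpair 1)  -- r(α 0) → s(α 0)
  set l : List E := l2 ++ α 0 :: (l3 ++ l1) with hldef
  have hl : IsPath s r v l v := by
    refine isPath_append hl2 ⟨rfl, isPath_append hl3 hl1⟩
  have hlpos : 0 < l.length := by simp [hldef]
  set m : ℕ := l.length - 1 with hm
  have hlen : l.length = m + 1 := by omega
  set γ : Fin (m + 1) → E := fun i => l.get (Fin.cast hlen.symm i) with hγ
  have hsγ0 : s (γ 0) = v := by
    simpa [hγ] using isPath_src_zero hl hlpos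
  refine ⟨m, γ, f, ?_, ?_, by rw [hsγ0, hsf], hrf, ?_⟩
  · intro i
    by_cases hi : (i : ℕ) < m
    · have hival : ((i + 1 : Fin (m + 1)) : ℕ) = (i : ℕ) + 1 := by
        have hine : i ≠ Fin.last m := by
          intro h; rw [h, Fin.val_last] at hi; omega
        rw [Fin.val_add_one, if_neg hine]
      have := isPath_chain_get hl (i : ℕ) (by omega)
      simp only [hγ]
      convert this using 3 <;> simp [Fin.cast, hival]
      -- linter: both goals need simp here
    · have hieq : (i : ℕ) = m := by omega
      have hilast : i = Fin.last m := Fin.ext (by simpa using hieq)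
      have h1 : i + 1 = 0 := by
        rw [hilast]; exact Fin.ext (by simp [Fin.val_add_one])
      have hlast := isPath_last_get hl m (by omega) (by omega)
      have hzero := isPath_src_zero hl hlpos
      rw [h1]
      simp only [hγ]
      have : r (l.get (Fin.cast hlen.symm i)) = v := by
        convert hlast using 3
        simp [Fin.cast, hieq]
      rw [this]
      symm
      convert hzero using 3
      exact Fin.ext (by simp)
  · intro i
    have hr : Reaches s r (s (γ i)) v :=
      isPath_src_get_reaches hl (i : ℕ) (by omega)
    intro hmem
    exact hvH (hHer hmem hr)
  · intro x
    rw [hsγ0]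
    constructor
    · intro hxv hxH
      exact hvH (hHer hxH hxv)
    · intro hx
      exact (hreachC x hx).trans (isPath_reaches hl1)
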